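/- Let ε ∈ ℝ and let F_ε : ℝ³ → ℝ³ be the Pikovsky–Topaj vector field. Let R : ℝ³ → ℝ³ be defined by R(ψ₁, ψ₂, ψ₃) = (π − ψ₃, π − ψ₂, π − ψ₁). Then: (i) R ∘ R = id; and (ii) if ψ : ℝ → ℝ³ is differentiable and satisfies ψ'(t) = F_ε(ψ(t)) for all t ∈ ℝ, then the function φ(t) := R(ψ(−t)) also satisfies φ'(t) = F_ε(φ(t)) for all t ∈ ℝ (i.e., the system is time-reversible with respect to the involution R). -/

import Mathlib

open Real

/-- The Pikovsky–Topaj vector field on ℝ³ (coded as `ℝ × ℝ × ℝ`). -/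
noncomputable def pikovskyTopaj (ε : ℝ) (p : ℝ × ℝ × ℝ) : ℝ × ℝ × ℝ :=
  (1 - 2 * ε * Real.sin p.1 + ε * Real.sin p.2.1,
   1 - 2 * ε * Real.sin p.2.1 + ε * Real.sin p.1 + ε * Real.sin p.2.2,
   1 - 2 * ε * Real.sin p.2.2 + ε * Real.sin p.2.1)

/-- The involution `R(ψ₁, ψ₂, ψ₃) = (π − ψ₃, π − ψ₂, π − ψ₁)`. -/
noncomputable def involR (p : ℝ × ℝ × ℝ) : ℝ × ℝ × ℝ :=
  (Real.pi - p.2.2, Real.pi - p.2.1, Real.pi - p.1)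

private lemma hasDerivAt_fst' {α β : Type*} [NormedAddCommGroup α] [NormedSpace ℝ α]
    [NormedAddCommGroup β] [NormedSpace ℝ β] {f : ℝ → α × β} {v : α × β} {t : ℝ}
    (h : HasDerivAt f v t) : HasDerivAt (fun s => (f s).1) v.1 t := by
  have := (h.hasFDerivAt.fst).hasDerivAt
  simpa using this

private lemma hasDerivAt_snd' {α β : Type*} [NormedAddCommGroup α] [NormedSpace ℝ α]
    [NormedAddCommGroup β] [NormedSpace ℝ β] {f : ℝ → α × β} {v : α × β} {t : ℝ}
    (h : HasDerivAt f v t) : HasDerivAt (fun s => (f s).2) v.2 t := by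
  have := (h.hasFDerivAt.snd).hasDerivAt
  simpa using this

/-- The Pikovsky–Topaj system is time-reversible with respect to the involution `R`. -/
theorem pikovskyTopaj_reversible (ε : ℝ) :
    involR ∘ involR = id ∧
    ∀ ψ : ℝ → ℝ × ℝ × ℝ,
      (∀ t : ℝ, HasDerivAt ψ (pikovskyTopaj ε (ψ t)) t) →
      ∀ t : ℝ, HasDerivAt (fun s => involR (ψ (-s)))
        (pikovskyTopaj ε (involR (ψ (-t)))) t := by
  constructor
  · funext p
    simp [involR]
  · intro ψ hψ t
    have h : HasDerivAt (fun s => ψ (-s)) (-(pikovskyTopaj ε (ψ (-t)))) t := by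
      simpa [Function.comp_def] using (hψ (-t)).scomp t (hasDerivAt_neg t)
    have h1 : HasDerivAt (fun s => (ψ (-s)).1) (-(pikovskyTopaj ε (ψ (-t))).1) t :=
      hasDerivAt_fst' h
    have h2 : HasDerivAt (fun s => (ψ (-s)).2.1) (-(pikovskyTopaj ε (ψ (-t))).2.1) t := by
      simpa using hasDerivAt_fst' (hasDerivAt_snd' h)
    have h3 : HasDerivAt (fun s => (ψ (-s)).2.2) (-(pikovskyTopaj ε (ψ (-t))).2.2) t := by
      simpa using hasDerivAt_snd' (hasDerivAt_snd' h)
    have g1 : HasDerivAt (fun s => Real.pi - (ψ (-s)).2.2) ((pikovskyTopaj ε (ψ (-t))).2.2) t := by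
      simpa [Pi.sub_def] using (hasDerivAt_const t Real.pi).sub h3
    have g2 : HasDerivAt (fun s => Real.pi - (ψ (-s)).2.1) ((pikovskyTopaj ε (ψ (-t))).2.1) t := by
      simpa [Pi.sub_def] using (hasDerivAt_const t Real.pi).sub h2
    have g3 : HasDerivAt (fun s => Real.pi - (ψ (-s)).1) ((pikovskyTopaj ε (ψ (-t))).1) t := by
      simpa [Pi.sub_def] using (hasDerivAt_const t Real.pi).sub h1
    have := g1.prodMk (g2.prodMk g3)
    convert this using 1
    all_goals ext <;> simp [pikovskyTopaj, involR, Real.sin_pi_sub] <;> ring
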